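/- Let k ≥ 2 and let κ be the multiplicative function defined on prime powers by κ(p^{uk+v}) = p^{-u-1} for u ≥ 0 and 2 ≤ v ≤ k, and κ(p^{uk+1}) = k·p^{-u-1/2} for u ≥ 0, with κ(1)=1. Then for all primes p and integers 0 ≤ j ≤ l, one has p^j κ(p^j) ≤ k·p^l κ(p^l), and consequently Σ_{d|q} d·κ(d) ≪ q^{1+ε} κ(q) for every ε > 0, uniformly in q ∈ ℕ. -/

import Mathlib

open Real
open scoped BigOperators

namespace Stmt14Aux

noncomputable def cfun (v : ℕ) : ℝ :=
  if v = 0 then 0 else if v = 1 then 1/2 else (v : ℝ) - 1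

lemma cfun_zero : cfun 0 = 0 := by simp [cfun]

lemma cfun_le (v : ℕ) : cfun v ≤ (v : ℝ) := by
  unfold cfun
  split_ifs with h1 h2
  · simp [h1]
  · simp [h2]; norm_num
  · linarith

lemma cfun_mono_succ (v : ℕ) : cfun v ≤ cfun (v + 1) := by
  match v with
  | 0 => norm_num [cfun]
  | 1 => norm_num [cfun]
  | (n+2) => simp only [cfun, if_neg (by omega : ¬(n+2=0)), if_neg (by omega : ¬(n+2=1)),
      if_neg (by omega : ¬(n+3=0)), if_neg (by omega : ¬(n+3=1))]; push_cast; linarith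

/-- exponent of `p` in `p^j κ(p^j)` (up to the factor `k` when `j % k = 1`). -/
noncomputable def E (k j : ℕ) : ℝ := ((j / k : ℕ) : ℝ) * ((k : ℝ) - 1) + cfun (j % k)

lemma E_mono {k : ℕ} (hk : 2 ≤ k) : Monotone (E k) := by
  apply monotone_nat_of_le_succ
  intro j
  have hk0 : 0 < k := by omega
  set u := j / k with hu
  set v := j % k with hv
  have hjuv : j = v + k * u := by rw [hu, hv, Nat.add_comm, Nat.div_add_mod]
  have hvk : v < k := Nat.mod_lt _ hk0
  rcases lt_or_eq_of_le (Nat.succ_le_of_lt hvk) with h | h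
  · have hd : (j + 1) / k = u := by
      rw [hjuv, show v + k * u + 1 = (v + 1) + k * u by ring,
        Nat.add_mul_div_left _ _ hk0, Nat.div_eq_of_lt h, Nat.zero_add]
    have hm : (j + 1) % k = v + 1 := by
      rw [hjuv, show v + k * u + 1 = (v + 1) + k * u by ring,
        Nat.add_mul_mod_self_left, Nat.mod_eq_of_lt h]
    unfold E
    rw [hd, hm, ← hu, ← hv]
    have := cfun_mono_succ v
    linarith
  · have h' : k = v + 1 := by omega
    have hj1 : j + 1 = k * (u + 1) := by rw [hjuv, h']; ring
    have hd : (j + 1) / k = u + 1 := by rw [hj1, Nat.mul_div_cancel_left _ hk0]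
    have hm : (j + 1) % k = 0 := by rw [hj1, Nat.mul_mod_right]
    unfold E
    rw [hd, hm, ← hu, ← hv, cfun_zero]
    have h1 : cfun v ≤ (v : ℝ) := cfun_le v
    have h2 : (v : ℝ) = (k : ℝ) - 1 := by
      have : (v : ℝ) + 1 = (k : ℝ) := by exact_mod_cast congrArg (Nat.cast (R := ℝ)) h
      linarith
    push_cast
    nlinarith [h1, h2]


lemma f_bounds {k : ℕ} (hk : 2 ≤ k) {κ : ℕ → ℝ}
    (hκ1 : κ 1 = 1)
    (hκv : ∀ p : ℕ, p.Prime → ∀ u v : ℕ, 2 ≤ v → v ≤ k →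
      κ (p ^ (u * k + v)) = (p : ℝ) ^ (-(u : ℝ) - 1))
    (hκ1' : ∀ p : ℕ, p.Prime → ∀ u : ℕ,
      κ (p ^ (u * k + 1)) = (k : ℝ) * (p : ℝ) ^ (-(u : ℝ) - 1 / 2))
    {p : ℕ} (hp : p.Prime) (j : ℕ) :
    (p : ℝ) ^ (E k j) ≤ (p : ℝ) ^ j * κ (p ^ j) ∧
      (p : ℝ) ^ j * κ (p ^ j) ≤ (k : ℝ) * (p : ℝ) ^ (E k j) := by
  have hp0 : (0 : ℝ) < p := by exact_mod_cast hp.pos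
  have hk1 : (1 : ℝ) ≤ k := by exact_mod_cast (by omega : 1 ≤ k)
  have hk0 : 0 < k := by omega
  have hpow : ∀ x : ℝ, (p : ℝ) ^ j * (p : ℝ) ^ x = (p : ℝ) ^ ((j : ℝ) + x) := by
    intro x
    rw [← Real.rpow_natCast (p : ℝ) j, ← Real.rpow_add hp0]
  have hEpos : (0 : ℝ) < (p : ℝ) ^ (E k j) := Real.rpow_pos_of_pos hp0 _
  set u := j / k with hu
  set v := j % k with hv
  have hjuv : j = u * k + v := by rw [hu, hv, Nat.mul_comm]; exact (Nat.div_add_mod j k).symm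
  have hvk : v < k := Nat.mod_lt _ hk0
  have key : (p : ℝ) ^ j * κ (p ^ j) = (p : ℝ) ^ (E k j) ∨
      (p : ℝ) ^ j * κ (p ^ j) = (k : ℝ) * (p : ℝ) ^ (E k j) := by
    rcases Nat.lt_or_ge v 2 with hv2 | hv2
    · interval_cases v
      · -- v = 0
        left
        rcases Nat.eq_zero_or_pos u with hu0 | hu0
        · have hj0 : j = 0 := by rw [hjuv, hu0, Nat.zero_mul]
          rw [hj0]
          norm_num [E, cfun_zero, hκ1]
        · obtain ⟨w, hw⟩ : ∃ w, u = w + 1 := ⟨u - 1, by omega⟩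
          have hj' : j = w * k + k := by rw [hjuv, hw]; ring
          have hκ : κ (p ^ j) = (p : ℝ) ^ (-(w : ℝ) - 1) := by
            rw [hj']; exact hκv p hp w k hk le_rfl
          have hjr : (j : ℝ) = (w : ℝ) * (k : ℝ) + (k : ℝ) := by
            rw [hj']; push_cast; ring
          rw [hκ, hpow]
          congr 1
          unfold E
          rw [← hu, ← hv, cfun_zero, hw, hjr]
          push_cast
          ring
      · -- v = 1
        right
        have hκ : κ (p ^ j) = (k : ℝ) * (p : ℝ) ^ (-(u : ℝ) - 1 / 2) := by
          rw [hjuv]; exact hκ1' p hp u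
        have hjr : (j : ℝ) = (u : ℝ) * (k : ℝ) + 1 := by
          rw [hjuv]; push_cast; ring
        rw [hκ, show (p : ℝ) ^ j * ((k : ℝ) * (p : ℝ) ^ (-(u : ℝ) - 1 / 2))
            = (k : ℝ) * ((p : ℝ) ^ j * (p : ℝ) ^ (-(u : ℝ) - 1 / 2)) by ring, hpow]
        congr 1
        unfold E
        rw [← hu, ← hv]
        simp only [cfun]
        norm_num
        rw [hjr]; ring
    · -- 2 ≤ v
      left
      have hκ : κ (p ^ j) = (p : ℝ) ^ (-(u : ℝ) - 1) := by
        rw [hjuv]; exact hκv p hp u v hv2 (le_of_lt hvk)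
      have hjr : (j : ℝ) = (u : ℝ) * (k : ℝ) + (v : ℝ) := by
        rw [hjuv]; push_cast; ring
      rw [hκ, hpow]
      congr 1
      unfold E
      rw [← hu, ← hv]
      simp only [cfun, if_neg (by omega : ¬ v = 0), if_neg (by omega : ¬ v = 1)]
      rw [hjr]; ring
  rcases key with h | h
  · rw [h]; exact ⟨le_refl _, by nlinarith⟩
  · rw [h]; exact ⟨by nlinarith, le_refl _⟩

lemma part1 {k : ℕ} (hk : 2 ≤ k) {κ : ℕ → ℝ}
    (hκ1 : κ 1 = 1)
    (hκv : ∀ p : ℕ, p.Prime → ∀ u v : ℕ, 2 ≤ v → v ≤ k →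
      κ (p ^ (u * k + v)) = (p : ℝ) ^ (-(u : ℝ) - 1))
    (hκ1' : ∀ p : ℕ, p.Prime → ∀ u : ℕ,
      κ (p ^ (u * k + 1)) = (k : ℝ) * (p : ℝ) ^ (-(u : ℝ) - 1 / 2))
    {p : ℕ} (hp : p.Prime) {j l : ℕ} (hjl : j ≤ l) :
    (p : ℝ) ^ j * κ (p ^ j) ≤ (k : ℝ) * (p : ℝ) ^ l * κ (p ^ l) := by
  have h1 := (f_bounds hk hκ1 hκv hκ1' hp j).2
  have h2 := (f_bounds hk hκ1 hκv hκ1' hp l).1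
  have hp1 : (1 : ℝ) ≤ p := by exact_mod_cast hp.one_lt.le
  have hE := E_mono hk hjl
  have h3 : (p : ℝ) ^ (E k j) ≤ (p : ℝ) ^ (E k l) := Real.rpow_le_rpow_of_exponent_le hp1 hE
  have hk0 : (0 : ℝ) ≤ k := by positivity
  calc (p : ℝ) ^ j * κ (p ^ j) ≤ (k : ℝ) * (p : ℝ) ^ (E k j) := h1
    _ ≤ (k : ℝ) * (p : ℝ) ^ (E k l) := by nlinarith
    _ ≤ (k : ℝ) * ((p : ℝ) ^ l * κ (p ^ l)) := by nlinarith
    _ = (k : ℝ) * (p : ℝ) ^ l * κ (p ^ l) := by ring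

lemma κ_pp_pos {k : ℕ} (hk : 2 ≤ k) {κ : ℕ → ℝ}
    (hκ1 : κ 1 = 1)
    (hκv : ∀ p : ℕ, p.Prime → ∀ u v : ℕ, 2 ≤ v → v ≤ k →
      κ (p ^ (u * k + v)) = (p : ℝ) ^ (-(u : ℝ) - 1))
    (hκ1' : ∀ p : ℕ, p.Prime → ∀ u : ℕ,
      κ (p ^ (u * k + 1)) = (k : ℝ) * (p : ℝ) ^ (-(u : ℝ) - 1 / 2))
    {p : ℕ} (hp : p.Prime) (j : ℕ) : 0 < κ (p ^ j) := by
  have h := (f_bounds hk hκ1 hκv hκ1' hp j).1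
  have hp0 : (0 : ℝ) < p := by exact_mod_cast hp.pos
  have hEpos : (0 : ℝ) < (p : ℝ) ^ (E k j) := Real.rpow_pos_of_pos hp0 _
  have hpj : (0 : ℝ) < (p : ℝ) ^ j := by positivity
  nlinarith

lemma κ_pos {k : ℕ} (hk : 2 ≤ k) {κ : ℕ → ℝ}
    (hκ1 : κ 1 = 1)
    (hmul : ∀ m n : ℕ, Nat.Coprime m n → κ (m * n) = κ m * κ n)
    (hκv : ∀ p : ℕ, p.Prime → ∀ u v : ℕ, 2 ≤ v → v ≤ k →
      κ (p ^ (u * k + v)) = (p : ℝ) ^ (-(u : ℝ) - 1))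
    (hκ1' : ∀ p : ℕ, p.Prime → ∀ u : ℕ,
      κ (p ^ (u * k + 1)) = (k : ℝ) * (p : ℝ) ^ (-(u : ℝ) - 1 / 2)) :
    ∀ n : ℕ, n ≠ 0 → 0 < κ n := by
  intro n
  induction n using Nat.recOnPosPrimePosCoprime with
  | prime_pow p n hp hn =>
    intro _
    exact κ_pp_pos hk hκ1 hκv hκ1' hp n
  | zero => intro h; exact absurd rfl h
  | one => intro _; rw [hκ1]; norm_num
  | coprime a b ha hb hab iha ihb =>
    intro _
    rw [hmul a b hab]
    exact mul_pos (iha (by omega)) (ihb (by omega))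

end Stmt14Aux

/-- For the multiplicative function `κ` with `κ(p^(uk+v)) = p^(-u-1)` (`2 ≤ v ≤ k`) and
`κ(p^(uk+1)) = k p^(-u-1/2)`, one has `p^j κ(p^j) ≤ k p^l κ(p^l)` for `j ≤ l`, and
`Σ_{d|q} d κ(d) ≪ q^(1+ε) κ(q)`. -/

theorem stmt_14 (k : ℕ) (hk : 2 ≤ k) (κ : ℕ → ℝ)
    (hκ1 : κ 1 = 1)
    (hmul : ∀ m n : ℕ, Nat.Coprime m n → κ (m * n) = κ m * κ n)
    (hκv : ∀ p : ℕ, p.Prime → ∀ u v : ℕ, 2 ≤ v → v ≤ k →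
      κ (p ^ (u * k + v)) = (p : ℝ) ^ (-(u : ℝ) - 1))
    (hκ1' : ∀ p : ℕ, p.Prime → ∀ u : ℕ,
      κ (p ^ (u * k + 1)) = (k : ℝ) * (p : ℝ) ^ (-(u : ℝ) - 1 / 2)) :
    (∀ p : ℕ, p.Prime → ∀ j l : ℕ, j ≤ l →
      (p : ℝ) ^ j * κ (p ^ j) ≤ (k : ℝ) * (p : ℝ) ^ l * κ (p ^ l)) ∧
    ∀ ε : ℝ, 0 < ε → ∃ C : ℝ, 0 < C ∧ ∀ q : ℕ, 1 ≤ q →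
      ∑ d ∈ q.divisors, (d : ℝ) * κ d ≤ C * (q : ℝ) ^ (1 + ε) * κ q := by
  have part1' : ∀ p : ℕ, p.Prime → ∀ j l : ℕ, j ≤ l →
      (p : ℝ) ^ j * κ (p ^ j) ≤ (k : ℝ) * (p : ℝ) ^ l * κ (p ^ l) :=
    fun p hp j l hjl => Stmt14Aux.part1 hk hκ1 hκv hκ1' hp hjl
  refine ⟨part1', ?_⟩
  intro ε hε
  have hκpos : ∀ n : ℕ, n ≠ 0 → 0 < κ n := Stmt14Aux.κ_pos hk hκ1 hmul hκv hκ1'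
  have hkR : (2 : ℝ) ≤ (k : ℝ) := by exact_mod_cast hk
  -- constants
  set δ : ℝ := (2 : ℝ) ^ ε - 1 with hδdef
  have hδ : 0 < δ := by
    have : (1 : ℝ) < (2 : ℝ) ^ ε :=
      (Real.one_lt_rpow_iff_of_pos (by norm_num)).mpr (Or.inl ⟨by norm_num, hε⟩)
    simp only [hδdef]; linarith
  set t : ℝ := max 1 (1 / δ) with htdef
  have ht1 : (1 : ℝ) ≤ t := le_max_left _ _
  have htδ : (1 : ℝ) ≤ t * δ := by
    have h := le_max_right 1 (1 / δ)
    calc (1 : ℝ) = (1 / δ) * δ := by field_simp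
      _ ≤ t * δ := by nlinarith
  set M : ℝ := (k : ℝ) * t with hMdef
  have hM1 : (1 : ℝ) ≤ M := by nlinarith
  set P₀ : ℕ := Nat.ceil ((2 * (k : ℝ)) ^ (1 / ε)) with hP₀def
  have hP₀prop : ∀ p : ℕ, (P₀ : ℕ) ≤ p → (2 * (k : ℝ)) ≤ (p : ℝ) ^ ε := by
    intro p hpP
    have h2k : (0 : ℝ) ≤ 2 * (k : ℝ) := by positivity
    have h1 : ((2 * (k : ℝ)) ^ (1 / ε)) ≤ (p : ℝ) := by
      calc ((2 * (k : ℝ)) ^ (1 / ε)) ≤ (P₀ : ℝ) := by rw [hP₀def]; exact Nat.le_ceil _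
        _ ≤ (p : ℝ) := Nat.cast_le.mpr hpP
    have h2 : (((2 * (k : ℝ)) ^ (1 / ε)) : ℝ) ^ ε ≤ (p : ℝ) ^ ε :=
      Real.rpow_le_rpow (Real.rpow_nonneg h2k _) h1 hε.le
    rwa [← Real.rpow_mul h2k, one_div, inv_mul_cancel₀ hε.ne', Real.rpow_one] at h2
  set w : ℕ → ℝ := fun p => if p < P₀ then M else 1 with hwdef
  have hw1 : ∀ p, (1 : ℝ) ≤ w p := by
    intro p; simp only [hwdef]; split_ifs; exacts [hM1, le_refl 1]
  -- key per-prime bound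
  have hkey : ∀ p : ℕ, p.Prime → ∀ n : ℕ, 1 ≤ n →
      ((n : ℝ) + 1) * (k : ℝ) ≤ w p * (p : ℝ) ^ ((n : ℝ) * ε) := by
    intro p hp n hn
    have hp2 : (2 : ℝ) ≤ (p : ℝ) := by exact_mod_cast hp.two_le
    have hp0 : (0 : ℝ) < (p : ℝ) := by linarith
    have hfin : ∀ x : ℝ, 0 ≤ x → (x ^ ε) ^ n = x ^ (ε * (n : ℝ)) := by
      intro x hx
      rw [← Real.rpow_natCast (x ^ ε) n, ← Real.rpow_mul hx]
    by_cases hpP : p < P₀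
    · have hwp : w p = M := by simp only [hwdef]; exact if_pos hpP
      rw [hwp]
      have hb : 1 + (n : ℝ) * δ ≤ (1 + δ) ^ n := one_add_mul_le_pow (by linarith) n
      have h1δ : (1 : ℝ) + δ = (2 : ℝ) ^ ε := by simp only [hδdef]; ring
      have hn1 : ((n : ℝ) + 1) ≤ t * (1 + (n : ℝ) * δ) := by
        have hn0 : (0 : ℝ) ≤ (n : ℝ) := Nat.cast_nonneg n
        nlinarith
      have h2e : ((2 : ℝ) ^ ε) ^ n ≤ ((p : ℝ) ^ ε) ^ n :=
        pow_le_pow_left₀ (by positivity) (Real.rpow_le_rpow (by norm_num) hp2 hε.le) n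
      have hM0 : (0 : ℝ) ≤ M := by linarith
      have hb0 : (0 : ℝ) ≤ 1 + (n : ℝ) * δ := by positivity
      calc ((n : ℝ) + 1) * (k : ℝ)
          ≤ (t * (1 + (n : ℝ) * δ)) * (k : ℝ) := by nlinarith
        _ = M * (1 + (n : ℝ) * δ) := by rw [hMdef]; ring
        _ ≤ M * (1 + δ) ^ n := by nlinarith
        _ = M * ((2 : ℝ) ^ ε) ^ n := by rw [h1δ]
        _ ≤ M * ((p : ℝ) ^ ε) ^ n := by nlinarith
        _ = M * (p : ℝ) ^ (ε * (n : ℝ)) := by rw [hfin _ hp0.le]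
        _ = M * (p : ℝ) ^ ((n : ℝ) * ε) := by rw [mul_comm ε (n : ℝ)]
    · have hwp : w p = 1 := by simp only [hwdef]; exact if_neg hpP
      rw [hwp, one_mul]
      push_neg at hpP
      have h2k := hP₀prop p hpP
      have hn2 : ((n : ℝ) + 1) ≤ (2 : ℝ) ^ n := by
        exact_mod_cast Nat.succ_le_of_lt (Nat.lt_two_pow_self (n := n))
      have hkn : (k : ℝ) ≤ (k : ℝ) ^ n := le_self_pow₀ (by linarith) (by omega)
      have hkn0 : (0 : ℝ) ≤ (k : ℝ) ^ n := by positivity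
      calc ((n : ℝ) + 1) * (k : ℝ)
          ≤ (2 : ℝ) ^ n * (k : ℝ) ^ n := by nlinarith
        _ = (2 * (k : ℝ)) ^ n := by rw [mul_pow]
        _ ≤ ((p : ℝ) ^ ε) ^ n := pow_le_pow_left₀ (by positivity) h2k n
        _ = (p : ℝ) ^ (ε * (n : ℝ)) := hfin _ hp0.le
        _ = (p : ℝ) ^ ((n : ℝ) * ε) := by rw [mul_comm ε (n : ℝ)]
  classical
  -- the arithmetic function d ↦ d * κ d and its zeta-convolution
  set f : ArithmeticFunction ℝ := ⟨fun d => (d : ℝ) * κ d, by simp⟩ with hfdef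
  have hfapp : ∀ d, f d = (d : ℝ) * κ d := fun d => rfl
  have hf : f.IsMultiplicative := by
    constructor
    · rw [hfapp, hκ1]; norm_num
    · intro m n hmn
      rw [hfapp, hfapp, hfapp, hmul m n hmn]
      push_cast
      ring
  set S : ArithmeticFunction ℝ := ↑(ArithmeticFunction.zeta) * f with hSdef
  have hS : S.IsMultiplicative := ArithmeticFunction.isMultiplicative_zeta.natCast.mul hf
  have hSsum : ∀ q : ℕ, S q = ∑ d ∈ q.divisors, (d : ℝ) * κ d := by
    intro q
    rw [hSdef, ArithmeticFunction.coe_zeta_mul_apply]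
    exact Finset.sum_congr rfl fun d _ => hfapp d
  -- prime-power bound for S
  have hSpp : ∀ p : ℕ, p.Prime → ∀ n : ℕ,
      S (p ^ n) ≤ ((n : ℝ) + 1) * ((k : ℝ) * (p : ℝ) ^ n * κ (p ^ n)) := by
    intro p hp n
    rw [hSsum, Nat.sum_divisors_prime_pow hp]
    have hstep : ∀ i ∈ Finset.range (n + 1),
        ((p ^ i : ℕ) : ℝ) * κ (p ^ i) ≤ (k : ℝ) * (p : ℝ) ^ n * κ (p ^ n) := by
      intro i hi
      have hcast : ((p ^ i : ℕ) : ℝ) = (p : ℝ) ^ i := by push_cast; ring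
      rw [hcast]
      exact part1' p hp i n (Nat.lt_succ_iff.mp (Finset.mem_range.mp hi))
    calc ∑ i ∈ Finset.range (n + 1), ((p ^ i : ℕ) : ℝ) * κ (p ^ i)
        ≤ ∑ _i ∈ Finset.range (n + 1), (k : ℝ) * (p : ℝ) ^ n * κ (p ^ n) :=
          Finset.sum_le_sum hstep
      _ = ((n : ℝ) + 1) * ((k : ℝ) * (p : ℝ) ^ n * κ (p ^ n)) := by
          rw [Finset.sum_const, Finset.card_range, nsmul_eq_mul]
          push_cast
          ring
  -- main induction
  have main : ∀ q : ℕ, q ≠ 0 →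
      S q ≤ (∏ p ∈ q.primeFactors, w p) * (q : ℝ) ^ ((1 : ℝ) + ε) * κ q := by
    intro q
    induction q using Nat.recOnPosPrimePosCoprime with
    | prime_pow p n hp hn =>
      intro _
      have hp0 : (0 : ℝ) < (p : ℝ) := by exact_mod_cast hp.pos
      have hκpp : 0 < κ (p ^ n) := hκpos _ (pow_ne_zero _ hp.pos.ne')
      have h1 := hSpp p hp n
      have h2 := hkey p hp n hn
      have hppow : ((p ^ n : ℕ) : ℝ) = (p : ℝ) ^ n := by push_cast; ring
      have h3 : ((p : ℝ) ^ n) ^ ((1 : ℝ) + ε) = (p : ℝ) ^ (n : ℕ) * (p : ℝ) ^ ((n : ℝ) * ε) := by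
        rw [← Real.rpow_natCast (p : ℝ) n, ← Real.rpow_mul hp0.le, mul_add, mul_one,
          Real.rpow_add hp0]
      have hprod : ∏ p' ∈ (p ^ n).primeFactors, w p' = w p := by
        rw [Nat.primeFactors_prime_pow (by omega) hp]
        exact Finset.prod_singleton _ _
      have hpn0 : (0 : ℝ) < (p : ℝ) ^ (n : ℕ) := by positivity
      rw [hprod, hppow]
      calc S (p ^ n) ≤ ((n : ℝ) + 1) * ((k : ℝ) * (p : ℝ) ^ n * κ (p ^ n)) := h1
        _ = (((n : ℝ) + 1) * (k : ℝ)) * (p : ℝ) ^ n * κ (p ^ n) := by ring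
        _ ≤ (w p * (p : ℝ) ^ ((n : ℝ) * ε)) * (p : ℝ) ^ n * κ (p ^ n) :=
            mul_le_mul_of_nonneg_right
              (mul_le_mul_of_nonneg_right h2 hpn0.le) hκpp.le
        _ = w p * ((p : ℝ) ^ n) ^ ((1 : ℝ) + ε) * κ (p ^ n) := by rw [h3]; ring
    | zero => intro h; exact absurd rfl h
    | one =>
      intro _
      rw [hSsum 1]
      simp [hκ1]
    | coprime a b ha hb hab iha ihb =>
      intro _
      have ha0 : a ≠ 0 := by omega
      have hb0 : b ≠ 0 := by omega
      have hSab : S (a * b) = S a * S b := hS.map_mul_of_coprime hab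
      have hSa := iha ha0
      have hSb := ihb hb0
      have hκa : 0 < κ a := hκpos a ha0
      have hκb : 0 < κ b := hκpos b hb0
      have hSnn : ∀ c : ℕ, 0 ≤ S c := by
        intro c
        rw [hSsum]
        refine Finset.sum_nonneg fun d hd => ?_
        have hd1 : d ≠ 0 := (Nat.pos_of_mem_divisors hd).ne'
        exact mul_nonneg (Nat.cast_nonneg d) (hκpos d hd1).le
      have hRa0 : 0 ≤ (∏ p ∈ a.primeFactors, w p) * (a : ℝ) ^ ((1 : ℝ) + ε) * κ a := by
        refine mul_nonneg (mul_nonneg ?_ ?_) hκa.le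
        · exact Finset.prod_nonneg fun p _ => le_trans zero_le_one (hw1 p)
        · positivity
      have hcomb := mul_le_mul hSa hSb (hSnn b) hRa0
      have hpf : (a * b).primeFactors = a.primeFactors ∪ b.primeFactors :=
        Nat.primeFactors_mul ha0 hb0
      have hdisj := Nat.Coprime.disjoint_primeFactors hab
      have hprodeq : ∏ p ∈ (a * b).primeFactors, w p
          = (∏ p ∈ a.primeFactors, w p) * (∏ p ∈ b.primeFactors, w p) := by
        rw [hpf, Finset.prod_union hdisj]
      have hpow : ((a * b : ℕ) : ℝ) ^ ((1 : ℝ) + ε)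
          = (a : ℝ) ^ ((1 : ℝ) + ε) * (b : ℝ) ^ ((1 : ℝ) + ε) := by
        push_cast
        exact Real.mul_rpow (Nat.cast_nonneg a) (Nat.cast_nonneg b)
      rw [hSab, hprodeq, hpow, hmul a b hab]
      calc S a * S b
          ≤ ((∏ p ∈ a.primeFactors, w p) * (a : ℝ) ^ ((1 : ℝ) + ε) * κ a)
            * ((∏ p ∈ b.primeFactors, w p) * (b : ℝ) ^ ((1 : ℝ) + ε) * κ b) := hcomb
        _ = (∏ p ∈ a.primeFactors, w p) * (∏ p ∈ b.primeFactors, w p)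
            * ((a : ℝ) ^ ((1 : ℝ) + ε) * (b : ℝ) ^ ((1 : ℝ) + ε)) * (κ a * κ b) := by ring
  -- conclude
  refine ⟨M ^ P₀, pow_pos (by linarith) _, ?_⟩
  intro q hq
  have hq0 : q ≠ 0 := by omega
  have h := main q hq0
  have hκq : 0 < κ q := hκpos q hq0
  have hrq : (0 : ℝ) ≤ (q : ℝ) ^ ((1 : ℝ) + ε) := by positivity
  have hc : (∏ p ∈ q.primeFactors, w p) ≤ M ^ P₀ := by
    have h1 : ∏ p ∈ q.primeFactors, w p
        = ∏ p ∈ q.primeFactors.filter (· < P₀), M := by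
      rw [Finset.prod_filter]
    have h2 : (q.primeFactors.filter (· < P₀)).card ≤ P₀ := by
      have hsub : q.primeFactors.filter (· < P₀) ⊆ Finset.range P₀ := by
        intro x hx
        exact Finset.mem_range.mpr (Finset.mem_filter.mp hx).2
      simpa using Finset.card_le_card hsub
    rw [h1, Finset.prod_const]
    exact pow_le_pow_right₀ hM1 h2
  rw [← hSsum q]
  calc S q ≤ (∏ p ∈ q.primeFactors, w p) * (q : ℝ) ^ ((1 : ℝ) + ε) * κ q := h
    _ ≤ M ^ P₀ * (q : ℝ) ^ ((1 : ℝ) + ε) * κ q := by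
        refine mul_le_mul_of_nonneg_right (mul_le_mul_of_nonneg_right hc hrq) hκq.le
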